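/- Proposition C.3 (regularity of the drift): Assume W satisfies the double-well assumptions and let q be the standing wave. Then the function s ↦ q''(s)/q'(s) is bounded on ℝ and Lipschitz continuous on ℝ. -/

import Mathlib

open Set Filter Topology

noncomputable section

def DoubleWell (W : ℝ → ℝ) : Prop :=
  ContDiff ℝ 3 W ∧
  (∀ u ∈ Set.Icc (-1:ℝ) 1, 0 ≤ W u) ∧
  W (-1) = 0 ∧ W 1 = 0 ∧
  (∀ u ∈ Set.Ioo (-1:ℝ) 1, 0 < W u) ∧
  deriv W (-1) = 0 ∧ deriv W 0 = 0 ∧ deriv W 1 = 0 ∧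
  (∀ u ∈ Set.Ioo (-1:ℝ) 0, 0 < deriv W u) ∧
  (∀ u ∈ Set.Ioo (0:ℝ) 1, deriv W u < 0) ∧
  0 < deriv (deriv W) (-1) ∧ 0 < deriv (deriv W) 1 ∧ deriv (deriv W) 0 < 0

def StandingWave (W q : ℝ → ℝ) : Prop :=
  ContDiff ℝ 2 q ∧ StrictMono q ∧ (∀ s, q s ∈ Set.Ioo (-1:ℝ) 1) ∧ q 0 = 0 ∧
  (∀ s, deriv (deriv q) s = deriv W (q s)) ∧
  Filter.Tendsto q Filter.atTop (nhds 1) ∧ Filter.Tendsto q Filter.atBot (nhds (-1))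

/-- helper: monotone on an interval from a pointwise derivative. -/
lemma monoOn_of_hasDerivAt {g g' : ℝ → ℝ} {a b : ℝ} (hg : ∀ x, HasDerivAt g (g' x) x)
    (h : ∀ x ∈ Set.Icc a b, 0 ≤ g' x) : MonotoneOn g (Set.Icc a b) := by
  apply monotoneOn_of_deriv_nonneg (convex_Icc a b)
  · exact fun x _ => (hg x).differentiableAt.continuousAt.continuousWithinAt
  · exact fun x _ => (hg x).differentiableAt.differentiableWithinAt
  · intro x hx
    rw [(hg x).deriv]
    exact h x (interior_subset hx)

/-- helper: antitone on an interval from a pointwise derivative. -/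
lemma antiOn_of_hasDerivAt {g g' : ℝ → ℝ} {a b : ℝ} (hg : ∀ x, HasDerivAt g (g' x) x)
    (h : ∀ x ∈ Set.Icc a b, g' x ≤ 0) : AntitoneOn g (Set.Icc a b) := by
  apply antitoneOn_of_deriv_nonpos (convex_Icc a b)
  · exact fun x _ => (hg x).differentiableAt.continuousAt.continuousWithinAt
  · exact fun x _ => (hg x).differentiableAt.differentiableWithinAt
  · intro x hx
    rw [(hg x).deriv]
    exact h x (interior_subset hx)

/-- Key analytic inequality: `(W')² ≤ C · W` on `[-1,1]`. -/
lemma dw_sq_deriv_le (W : ℝ → ℝ) (hW : DoubleWell W) :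
    ∃ C : ℝ, 0 ≤ C ∧ ∀ u ∈ Set.Icc (-1:ℝ) 1, (deriv W u)^2 ≤ C * W u := by
  obtain ⟨hC3, hWnn, hWm1, hW1, hWpos, hdWm1, hdW0, hdW1, _, _, hm1, hm2, _⟩ := hW
  have hW3 := hC3
  have hW' : ContDiff ℝ 2 (deriv W) := by
    rw [show (3 : WithTop ℕ∞) = 2 + 1 by norm_num, contDiff_succ_iff_deriv] at hW3
    exact hW3.2.2
  have hW2 := hW'
  have hW'' : ContDiff ℝ 1 (deriv (deriv W)) := by
    rw [show (2 : WithTop ℕ∞) = 1 + 1 by norm_num, contDiff_succ_iff_deriv] at hW2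
    exact hW2.2.2
  have diffW : Differentiable ℝ W := hC3.differentiable (by norm_num)
  have diffW' : Differentiable ℝ (deriv W) := hW'.differentiable (by norm_num)
  have contW' : Continuous (deriv W) := diffW'.continuous
  have contW'' : Continuous (deriv (deriv W)) := hW''.continuous
  -- global bound for W'' on [-1,1]
  obtain ⟨M₀, hM₀⟩ := isCompact_Icc.exists_bound_of_continuousOn
    (s := Set.Icc (-1:ℝ) 1) contW''.continuousOn
  set M := max M₀ 1 with hMdef
  have hMpos : (0:ℝ) < M := lt_of_lt_of_le one_pos (le_max_right _ _)
  have hM : ∀ u ∈ Set.Icc (-1:ℝ) 1, |deriv (deriv W) u| ≤ M :=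
    fun u hu => le_trans (hM₀ u hu) (le_max_left _ _)
  set m₁ := deriv (deriv W) (-1) with hm₁def
  set m₂ := deriv (deriv W) 1 with hm₂def
  -- neighborhood of -1 where W'' ≥ m₁/2
  have near₁ : ∃ a > 0, a ≤ 1 ∧ ∀ u ∈ Set.Icc (-1:ℝ) (-1+a), m₁/2 ≤ deriv (deriv W) u := by
    rcases Metric.continuousAt_iff.1 contW''.continuousAt (m₁/2) (half_pos hm1) with ⟨δ, hδ, hball⟩
    refine ⟨min (δ/2) 1, by positivity, min_le_right _ _, ?_⟩
    intro u hu
    have hd : dist u (-1) < δ := by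
      rw [Real.dist_eq, abs_sub_lt_iff]
      constructor
      · have := hu.2
        have h1 : min (δ/2) 1 ≤ δ/2 := min_le_left _ _
        linarith
      · linarith [hu.1, hδ]
    have := hball hd
    rw [Real.dist_eq, abs_sub_lt_iff] at this
    linarith [this.2]
  -- neighborhood of 1 where W'' ≥ m₂/2
  have near₂ : ∃ b > 0, b ≤ 1 ∧ ∀ u ∈ Set.Icc (1-b) (1:ℝ), m₂/2 ≤ deriv (deriv W) u := by
    rcases Metric.continuousAt_iff.1 (contW''.continuousAt (x := 1)) (m₂/2) (half_pos hm2)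
      with ⟨δ, hδ, hball⟩
    refine ⟨min (δ/2) 1, by positivity, min_le_right _ _, ?_⟩
    intro u hu
    have hd : dist u 1 < δ := by
      rw [Real.dist_eq, abs_sub_lt_iff]
      constructor
      · linarith [hu.2, hδ]
      · have := hu.1
        have h1 : min (δ/2) 1 ≤ δ/2 := min_le_left _ _
        linarith
    have := hball hd
    rw [Real.dist_eq, abs_sub_lt_iff] at this
    linarith [this.2]
  obtain ⟨a, ha, ha1, hna⟩ := near₁
  obtain ⟨b, hb, hb1, hnb⟩ := near₂
  -- estimates near -1
  have sub₁ : Set.Icc (-1:ℝ) (-1+a) ⊆ Set.Icc (-1:ℝ) 1 :=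
    Set.Icc_subset_Icc le_rfl (by linarith)
  have h1 : ∀ u ∈ Set.Icc (-1:ℝ) (-1+a), m₁/2*(u+1) ≤ deriv W u := by
    have hg : ∀ x, HasDerivAt (fun u => deriv W u - m₁/2*(u+1))
        (deriv (deriv W) x - m₁/2) x := by
      intro x
      have h2 : HasDerivAt (fun u : ℝ => m₁/2*(u+1)) (m₁/2) x := by
        simpa using (((hasDerivAt_id x).add_const 1).const_mul (m₁/2))
      exact (diffW' x).hasDerivAt.sub h2
    have hmono := monoOn_of_hasDerivAt hg
      (fun x hx => by linarith [hna x hx])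
    intro u hu
    have := hmono (Set.left_mem_Icc.2 (by linarith)) hu hu.1
    simp only [hdWm1] at this
    linarith [this]
  have h2 : ∀ u ∈ Set.Icc (-1:ℝ) (-1+a), m₁/4*(u+1)^2 ≤ W u := by
    have hg : ∀ x, HasDerivAt (fun u => W u - m₁/4*(u+1)^2)
        (deriv W x - m₁/2*(x+1)) x := by
      intro x
      have h2' : HasDerivAt (fun u : ℝ => m₁/4*(u+1)^2) (m₁/2*(x+1)) x := by
        have := (((hasDerivAt_id x).add_const 1).pow 2).const_mul (m₁/4)
        convert this using 1 <;> (try simp only [id_eq]) <;> (try funext y) <;> (try simp only [Pi.pow_apply, Pi.add_apply, Pi.sub_apply]) <;> (try ring) <;> try rfl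
      exact (diffW x).hasDerivAt.sub h2'
    have hmono := monoOn_of_hasDerivAt hg
      (fun x hx => by linarith [h1 x hx])
    intro u hu
    have := hmono (Set.left_mem_Icc.2 (by linarith)) hu hu.1
    simp only [hWm1] at this
    have he : (-1 + 1 : ℝ) = 0 := by ring
    rw [he] at this
    simp at this
    linarith [this]
  have h3 : ∀ u ∈ Set.Icc (-1:ℝ) (-1+a), deriv W u ≤ M*(u+1) := by
    have hg : ∀ x, HasDerivAt (fun u => M*(u+1) - deriv W u)
        (M - deriv (deriv W) x) x := by
      intro x
      have h2 : HasDerivAt (fun u : ℝ => M*(u+1)) M x := by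
        simpa using (((hasDerivAt_id x).add_const 1).const_mul M)
      exact h2.sub (diffW' x).hasDerivAt
    have hmono := monoOn_of_hasDerivAt hg
      (fun x hx => by linarith [abs_le.1 (hM x (sub₁ hx)) |>.2])
    intro u hu
    have := hmono (Set.left_mem_Icc.2 (by linarith)) hu hu.1
    simp only [hdWm1] at this
    linarith [this]
  have bound₁ : ∀ u ∈ Set.Icc (-1:ℝ) (-1+a), (deriv W u)^2 ≤ (4*M^2/m₁) * W u := by
    intro u hu
    have hu1 : (0:ℝ) ≤ u + 1 := by linarith [hu.1]
    have e1 : 0 ≤ deriv W u :=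
      le_trans (mul_nonneg (half_pos hm1).le hu1) (h1 u hu)
    have e2 : (deriv W u)^2 ≤ M^2*(u+1)^2 := by nlinarith [h3 u hu]
    have e3 : m₁*(u+1)^2 ≤ 4 * W u := by nlinarith [h2 u hu]
    rw [div_mul_eq_mul_div, le_div_iff₀ hm1]
    nlinarith [mul_le_mul_of_nonneg_right e2 hm1.le,
      mul_le_mul_of_nonneg_left e3 (sq_nonneg M)]
  -- estimates near 1
  have sub₂ : Set.Icc (1-b) (1:ℝ) ⊆ Set.Icc (-1:ℝ) 1 :=
    Set.Icc_subset_Icc (by linarith) le_rfl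
  have h1' : ∀ u ∈ Set.Icc (1-b) (1:ℝ), deriv W u ≤ -(m₂/2*(1-u)) := by
    have hg : ∀ x, HasDerivAt (fun u => deriv W u + m₂/2*(1-u))
        (deriv (deriv W) x - m₂/2) x := by
      intro x
      have h2 : HasDerivAt (fun u : ℝ => m₂/2*(1-u)) (-(m₂/2)) x := by
        have := ((hasDerivAt_id x).const_sub 1).const_mul (m₂/2)
        simpa using this
      have := (diffW' x).hasDerivAt.add h2
      convert this using 1 <;> (try simp only [id_eq]) <;> (try funext y) <;> (try simp only [Pi.pow_apply, Pi.add_apply, Pi.sub_apply]) <;> (try ring) <;> try rfl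
    have hmono := monoOn_of_hasDerivAt hg
      (fun x hx => by linarith [hnb x hx])
    intro u hu
    have := hmono hu (Set.right_mem_Icc.2 (by linarith)) hu.2
    simp only [hdW1] at this
    have he : (1 - 1 : ℝ) = 0 := by ring
    rw [he] at this
    simp at this
    linarith [this]
  have h2' : ∀ u ∈ Set.Icc (1-b) (1:ℝ), m₂/4*(1-u)^2 ≤ W u := by
    have hg : ∀ x, HasDerivAt (fun u => W u - m₂/4*(1-u)^2)
        (deriv W x + m₂/2*(1-x)) x := by
      intro x
      have h2'' : HasDerivAt (fun u : ℝ => m₂/4*(1-u)^2) (-(m₂/2*(1-x))) x := by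
        have := (((hasDerivAt_id x).const_sub 1).pow 2).const_mul (m₂/4)
        convert this using 1 <;> (try simp only [id_eq]) <;> (try funext y) <;> (try simp only [Pi.pow_apply, Pi.add_apply, Pi.sub_apply]) <;> (try ring) <;> try rfl
      have := (diffW x).hasDerivAt.sub h2''
      convert this using 1 <;> (try simp only [id_eq]) <;> (try funext y) <;> (try simp only [Pi.pow_apply, Pi.add_apply, Pi.sub_apply]) <;> (try ring) <;> try rfl
    have hanti := antiOn_of_hasDerivAt hg
      (fun x hx => by linarith [h1' x hx])
    intro u hu
    have := hanti hu (Set.right_mem_Icc.2 (by linarith)) hu.2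
    simp only [hW1] at this
    have he : (1 - 1 : ℝ) = 0 := by ring
    rw [he] at this
    simp at this
    linarith [this]
  have h3' : ∀ u ∈ Set.Icc (1-b) (1:ℝ), -(M*(1-u)) ≤ deriv W u := by
    have hg : ∀ x, HasDerivAt (fun u => deriv W u + M*(1-u))
        (deriv (deriv W) x - M) x := by
      intro x
      have h2 : HasDerivAt (fun u : ℝ => M*(1-u)) (-M) x := by
        have := ((hasDerivAt_id x).const_sub 1).const_mul M
        simpa using this
      have := (diffW' x).hasDerivAt.add h2
      convert this using 1 <;> (try simp only [id_eq]) <;> (try funext y) <;> (try simp only [Pi.pow_apply, Pi.add_apply, Pi.sub_apply]) <;> (try ring) <;> try rfl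
    have hanti := antiOn_of_hasDerivAt hg
      (fun x hx => by linarith [abs_le.1 (hM x (sub₂ hx)) |>.2])
    intro u hu
    have := hanti hu (Set.right_mem_Icc.2 (by linarith)) hu.2
    simp only [hdW1] at this
    have he : (1 - 1 : ℝ) = 0 := by ring
    rw [he] at this
    simp at this
    linarith [this]
  have bound₂ : ∀ u ∈ Set.Icc (1-b) (1:ℝ), (deriv W u)^2 ≤ (4*M^2/m₂) * W u := by
    intro u hu
    have hu1 : (0:ℝ) ≤ 1 - u := by linarith [hu.2]
    have e1 : deriv W u ≤ 0 :=
      le_trans (h1' u hu) (by nlinarith [half_pos hm2])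
    have e2 : (deriv W u)^2 ≤ M^2*(1-u)^2 := by nlinarith [h3' u hu]
    have e3 : m₂*(1-u)^2 ≤ 4 * W u := by nlinarith [h2' u hu]
    rw [div_mul_eq_mul_div, le_div_iff₀ hm2]
    nlinarith [mul_le_mul_of_nonneg_right e2 hm2.le,
      mul_le_mul_of_nonneg_left e3 (sq_nonneg M)]
  -- middle region
  obtain ⟨u₀, hu₀I, hu₀min⟩ := isCompact_Icc.exists_isMinOn
    (s := Set.Icc (-1+a) (1-b)) ⟨0, by constructor <;> linarith⟩
    diffW.continuous.continuousOn
  have hw₀ : 0 < W u₀ := hWpos u₀ ⟨by linarith [hu₀I.1], by linarith [hu₀I.2]⟩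
  obtain ⟨K₀, hK₀⟩ := isCompact_Icc.exists_bound_of_continuousOn
    (s := Set.Icc (-1:ℝ) 1) contW'.continuousOn
  set K := max K₀ 0 with hKdef
  have hK : ∀ u ∈ Set.Icc (-1:ℝ) 1, |deriv W u| ≤ K :=
    fun u hu => le_trans (hK₀ u hu) (le_max_left _ _)
  have bound₃ : ∀ u ∈ Set.Icc (-1+a) (1-b), (deriv W u)^2 ≤ (K^2/W u₀) * W u := by
    intro u hu
    have huI : u ∈ Set.Icc (-1:ℝ) 1 := ⟨by linarith [hu.1], by linarith [hu.2]⟩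
    have hKu := hK u huI
    have h1 : (deriv W u)^2 ≤ K^2 := by
      have := abs_le.1 hKu
      nlinarith
    have h2 : W u₀ ≤ W u := isMinOn_iff.1 hu₀min u hu
    calc (deriv W u)^2 ≤ K^2 := h1
      _ = (K^2/W u₀) * W u₀ := by
          rw [div_mul_cancel₀ _ (ne_of_gt hw₀)]
      _ ≤ (K^2/W u₀) * W u :=
          mul_le_mul_of_nonneg_left h2 (div_nonneg (sq_nonneg K) hw₀.le)
  -- combine
  refine ⟨max (max (4*M^2/m₁) (4*M^2/m₂)) (K^2/W u₀), ?_, ?_⟩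
  · have : (0:ℝ) ≤ K^2/W u₀ := div_nonneg (sq_nonneg K) hw₀.le
    exact le_trans this (le_max_right _ _)
  · intro u hu
    have hWu : 0 ≤ W u := hWnn u hu
    rcases le_or_gt u (-1+a) with hc1 | hc1
    · have := bound₁ u ⟨hu.1, hc1⟩
      have hle : 4*M^2/m₁ ≤ max (max (4*M^2/m₁) (4*M^2/m₂)) (K^2/W u₀) :=
        le_trans (le_max_left _ _) (le_max_left _ _)
      exact le_trans this (mul_le_mul_of_nonneg_right hle hWu)
    · rcases le_or_gt (1-b) u with hc2 | hc2
      · have := bound₂ u ⟨hc2, hu.2⟩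
        have hle : 4*M^2/m₂ ≤ max (max (4*M^2/m₁) (4*M^2/m₂)) (K^2/W u₀) :=
          le_trans (le_max_right _ _) (le_max_left _ _)
        exact le_trans this (mul_le_mul_of_nonneg_right hle hWu)
      · have := bound₃ u ⟨hc1.le, hc2.le⟩
        have hle : K^2/W u₀ ≤ max (max (4*M^2/m₁) (4*M^2/m₂)) (K^2/W u₀) :=
          le_max_right _ _
        exact le_trans this (mul_le_mul_of_nonneg_right hle hWu)

/-- Proposition C.3: the drift s ↦ q''(s)/q'(s) is bounded and Lipschitz on ℝ. -/
theorem drift_bounded_lipschitz (W q : ℝ → ℝ) (hW : DoubleWell W) (hq : StandingWave W q) :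
    (∃ C : ℝ, ∀ s : ℝ, |deriv (deriv q) s / deriv q s| ≤ C) ∧
    (∃ L : ℝ, ∀ s t : ℝ,
      |deriv (deriv q) s / deriv q s - deriv (deriv q) t / deriv q t| ≤ L * |s - t|) := by
  obtain ⟨C, hC0, hC⟩ := dw_sq_deriv_le W hW
  obtain ⟨hq2, hqmono, hqIoo, hq00, hode, htop, hbot⟩ := hq
  obtain ⟨hC3, hWnn, hWm1, hW1, hWpos, hdWm1, hdW0, hdW1, _, _, _, _, _⟩ := hW
  have hW3 := hC3
  have hW' : ContDiff ℝ 2 (deriv W) := by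
    rw [show (3 : WithTop ℕ∞) = 2 + 1 by norm_num, contDiff_succ_iff_deriv] at hW3
    exact hW3.2.2
  have hW'' : ContDiff ℝ 1 (deriv (deriv W)) := by
    rw [show (2 : WithTop ℕ∞) = 1 + 1 by norm_num, contDiff_succ_iff_deriv] at hW'
    exact hW'.2.2
  have diffW : Differentiable ℝ W := hC3.differentiable (by norm_num)
  have hW'2 : ContDiff ℝ 2 (deriv W) := by
    have hW3' := hC3
    rw [show (3 : WithTop ℕ∞) = 2 + 1 by norm_num, contDiff_succ_iff_deriv] at hW3'
    exact hW3'.2.2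
  have diffW' : Differentiable ℝ (deriv W) := hW'2.differentiable (by norm_num)
  have contW'' : Continuous (deriv (deriv W)) := hW''.continuous
  have diffq : Differentiable ℝ q := hq2.differentiable (by norm_num)
  have hq2' := hq2
  have hq' : ContDiff ℝ 1 (deriv q) := by
    rw [show (2 : WithTop ℕ∞) = 1 + 1 by norm_num, contDiff_succ_iff_deriv] at hq2'
    exact hq2'.2.2
  have diffq' : Differentiable ℝ (deriv q) := hq'.differentiable (by norm_num)
  -- energy conservation
  have hEderiv : ∀ x : ℝ, HasDerivAt (fun s => (deriv q s)^2/2 - W (q s)) 0 x := by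
    intro x
    have h1 : HasDerivAt (fun s => (deriv q s)^2/2)
        (deriv q x * deriv (deriv q) x) x := by
      have := ((diffq' x).hasDerivAt.pow 2).div_const 2
      convert this using 1 <;> (try simp only [id_eq]) <;> (try funext y) <;> (try simp only [Pi.pow_apply, Pi.add_apply, Pi.sub_apply]) <;> (try ring) <;> try rfl
    have h2 : HasDerivAt (fun s => W (q s)) (deriv W (q x) * deriv q x) x :=
      (diffW (q x)).hasDerivAt.comp x (diffq x).hasDerivAt
    have := h1.sub h2
    convert this using 1 <;> (try rfl)
    rw [hode x]
    ring
  have hEconst : ∀ s : ℝ, (deriv q s)^2/2 - W (q s) = (deriv q 0)^2/2 - W (q 0) := by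
    intro s
    exact is_const_of_deriv_eq_zero
      (fun x => (hEderiv x).differentiableAt) (fun x => (hEderiv x).deriv) s 0
  obtain ⟨e, hedef⟩ : ∃ e : ℝ, e = (deriv q 0)^2/2 - W (q 0) := ⟨_, rfl⟩
  have hEconst' : ∀ s : ℝ, (deriv q s)^2/2 - W (q s) = e := fun s => by
    rw [hedef]; exact hEconst s
  -- q' ≥ 0 from monotonicity
  have hq'nonneg : ∀ s, 0 ≤ deriv q s := by
    intro s
    have hslope : Tendsto (slope q s) (𝓝[>] s) (𝓝 (deriv q s)) :=
      ((hasDerivAt_iff_tendsto_slope.1 (diffq s).hasDerivAt).mono_left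
        (nhdsWithin_mono _ (fun y hy => ne_of_gt hy)))
    refine ge_of_tendsto hslope ?_
    filter_upwards [self_mem_nhdsWithin] with y hy
    rw [slope_def_field]
    have h1 : s < y := hy
    have h2 : q s ≤ q y := (hqmono.le_iff_le).2 h1.le
    exact div_nonneg (by linarith) (by linarith)
  -- e ≥ 0
  have henn : 0 ≤ e := by
    have h1 : Tendsto (fun s => -W (q s)) atTop (𝓝 0) := by
      have : Tendsto (fun s => W (q s)) atTop (𝓝 (W 1)) :=
        (diffW.continuous.tendsto 1).comp htop
      rw [hW1] at this
      simpa using this.neg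
    refine le_of_tendsto h1 (Eventually.of_forall fun s => ?_)
    have := hEconst' s
    show -W (q s) ≤ e
    linarith [sq_nonneg (deriv q s)]
  -- e ≤ 0
  have henp : e ≤ 0 := by
    by_contra h
    push_neg at h
    have hse : 0 < Real.sqrt e := Real.sqrt_pos.2 h
    have hlow : ∀ s, Real.sqrt e ≤ deriv q s := by
      intro s
      have h1 := hEconst' s
      have h2 : 0 ≤ W (q s) := hWnn (q s) ⟨(hqIoo s).1.le, (hqIoo s).2.le⟩
      have h3 : e ≤ (deriv q s)^2 := by linarith [sq_nonneg (deriv q s)]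
      calc Real.sqrt e ≤ Real.sqrt ((deriv q s)^2) := Real.sqrt_le_sqrt h3
        _ = |deriv q s| := Real.sqrt_sq_eq_abs _
        _ = deriv q s := abs_of_nonneg (hq'nonneg s)
    have hmono : Monotone (fun s => q s - Real.sqrt e * s) := by
      apply monotone_of_deriv_nonneg
      · exact diffq.sub ((differentiable_id).const_mul _)
      · intro x
        have hx : HasDerivAt (fun s => q s - Real.sqrt e * s)
            (deriv q x - Real.sqrt e) x := by
          have h2 : HasDerivAt (fun s : ℝ => Real.sqrt e * s) (Real.sqrt e) x := by
            simpa using (hasDerivAt_id x).const_mul (Real.sqrt e)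
          exact (diffq x).hasDerivAt.sub h2
        rw [hx.deriv]
        linarith [hlow x]
    have hgrow := hmono (show (0:ℝ) ≤ 2 / Real.sqrt e by positivity)
    have hgrow' : q 0 - Real.sqrt e * 0 ≤
        q (2/Real.sqrt e) - Real.sqrt e * (2/Real.sqrt e) := hgrow
    have hval2 : Real.sqrt e * (2 / Real.sqrt e) = 2 := by field_simp
    rw [hq00, hval2] at hgrow'
    linarith [(hqIoo (2 / Real.sqrt e)).2]
  have hezero : e = 0 := le_antisymm henp henn
  -- q'(s)² = 2 W(q s), q' > 0
  have hE : ∀ s, (deriv q s)^2 = 2 * W (q s) := by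
    intro s
    have := hEconst' s
    rw [hezero] at this
    linarith
  have hWq : ∀ s, 0 < W (q s) := fun s => hWpos _ (hqIoo s)
  have hq'pos : ∀ s, 0 < deriv q s := by
    intro s
    rcases (hq'nonneg s).lt_or_eq with h | h
    · exact h
    · exfalso
      have := hE s
      rw [← h] at this
      simp at this
      nlinarith [hWq s]
  have hqIcc : ∀ s, q s ∈ Set.Icc (-1:ℝ) 1 :=
    fun s => ⟨(hqIoo s).1.le, (hqIoo s).2.le⟩
  -- ratio bound
  have hratio : ∀ s, (deriv W (q s))^2 / (deriv q s)^2 ≤ C / 2 := by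
    intro s
    rw [hE s]
    rw [div_le_div_iff₀ (by nlinarith [hWq s]) two_pos]
    have := hC (q s) (hqIcc s)
    nlinarith [hWq s]
  constructor
  · refine ⟨Real.sqrt (C/2), fun s => ?_⟩
    rw [hode s]
    have h1 : (deriv W (q s) / deriv q s)^2 ≤ C/2 := by
      rw [div_pow]
      exact hratio s
    calc |deriv W (q s) / deriv q s|
        = Real.sqrt ((deriv W (q s) / deriv q s)^2) := (Real.sqrt_sq_eq_abs _).symm
      _ ≤ Real.sqrt (C/2) := Real.sqrt_le_sqrt h1
  · -- Lipschitz part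
    obtain ⟨M₀, hM₀⟩ := isCompact_Icc.exists_bound_of_continuousOn
      (s := Set.Icc (-1:ℝ) 1) contW''.continuousOn
    set M := max M₀ 0 with hMdef
    have hM : ∀ u ∈ Set.Icc (-1:ℝ) 1, |deriv (deriv W) u| ≤ M :=
      fun u hu => le_trans (hM₀ u hu) (le_max_left _ _)
    have hfun : deriv (deriv q) = fun s => deriv W (q s) := funext hode
    set f : ℝ → ℝ := fun s => deriv W (q s) / deriv q s with hfdef
    have hfderiv : ∀ x : ℝ, HasDerivAt f
        (deriv (deriv W) (q x) - (deriv W (q x))^2 / (deriv q x)^2) x := by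
      intro x
      have h1 : HasDerivAt (fun s => deriv W (q s))
          (deriv (deriv W) (q x) * deriv q x) x :=
        (diffW' (q x)).hasDerivAt.comp x (diffq x).hasDerivAt
      have h2 : HasDerivAt (deriv q) (deriv W (q x)) x := by
        have := (diffq' x).hasDerivAt
        rwa [hode x] at this
      have h3 := h1.div h2 (ne_of_gt (hq'pos x))
      convert h3 using 1 <;> (try rfl)
      have hne : deriv q x ≠ 0 := ne_of_gt (hq'pos x)
      field_simp
    have hbound : ∀ x : ℝ,
        |deriv (deriv W) (q x) - (deriv W (q x))^2 / (deriv q x)^2| ≤ M + C/2 := by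
      intro x
      have h1 : |deriv (deriv W) (q x)| ≤ M := hM (q x) (hqIcc x)
      have h2 : 0 ≤ (deriv W (q x))^2 / (deriv q x)^2 := by positivity
      have h3 := hratio x
      rw [abs_sub_comm, abs_sub_le_iff]
      constructor
      · have := abs_le.1 h1
        linarith
      · have := abs_le.1 h1
        linarith
    refine ⟨M + C/2, fun s t => ?_⟩
    rw [hfun]
    have key : ‖f s - f t‖ ≤ (M + C/2) * ‖s - t‖ := by
      apply Convex.norm_image_sub_le_of_norm_deriv_le (s := (Set.univ : Set ℝ))
        (fun x _ => (hfderiv x).differentiableAt) ?_ convex_univ (Set.mem_univ t)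
        (Set.mem_univ s)
      intro x _
      rw [(hfderiv x).deriv]
      simpa using hbound x
    simpa using key

end
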